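/- Let Γ be a group equipped with a proper left-invariant metric d. Let T be a bounded operator on ℓ²(Γ) of finite propagation: there exists R ≥ 0 such that ⟨e_y, T e_x⟩ = 0 whenever d(x,y) > R. Let f : Γ → ℂ be a bounded function satisfying the Higson condition: for every ε > 0 and every S ≥ 0 the set {x ∈ Γ | ∃ y, d(x,y) ≤ S and |f(x) − f(y)| ≥ ε} is finite. Then the commutator T ∘ M_f − M_f ∘ T is a compact operator on ℓ²(Γ). (This is the paper's Remark 22: any operator of finite propagation commutes modulo compact operators with multiplication by a function that extends continuously to the Gromov compactification; the continuity hypothesis is expressed by the Higson condition.) -/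

import Mathlib

open scoped ENNReal

noncomputable section

namespace Remark22

variable {Γ : Type*} [DecidableEq Γ]

local notation "H" => lp (fun _ : Γ => ℂ) 2

/-- Evaluation at a coordinate, as a continuous linear map on `ℓ²`. -/
noncomputable def ev (y : Γ) : H →L[ℂ] ℂ :=
  LinearMap.mkContinuous
    { toFun := fun ξ : H => ξ y
      map_add' := fun ξ ψ => by simp
      map_smul' := fun c ξ => by simp }
    1 (fun ξ => by rw [one_mul]; exact lp.norm_apply_le_norm (by norm_num) ξ y)

@[simp] theorem ev_apply (y : Γ) (ξ : H) : ev y ξ = ξ y := rfl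

theorem single_eq_smul (x : Γ) (c : ℂ) :
    (lp.single 2 x c : H) = c • (lp.single 2 x (1 : ℂ) : H) := by
  rw [eq_comm]
  rw [← lp.single_smul, smul_eq_mul, mul_one]

theorem hasSum_coord (T : H →L[ℂ] H) (ζ : H) (y : Γ) :
    HasSum (fun x => ζ x * T (lp.single 2 x 1) y) (T ζ y) := by
  have h := (lp.hasSum_single (E := fun _ : Γ => ℂ) ENNReal.ofNat_ne_top ζ).mapL
    ((ev y).comp T)
  have h2 : ∀ x, ((ev y).comp T) (lp.single 2 x (ζ x)) = ζ x * T (lp.single 2 x 1) y := by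
    intro x
    rw [single_eq_smul, map_smul]
    simp [smul_eq_mul]
  simpa only [h2, ContinuousLinearMap.comp_apply, ev_apply] using h

theorem isCompactOperator_smulRight {E F : Type*} [NormedAddCommGroup E] [NormedSpace ℂ E]
    [NormedAddCommGroup F] [NormedSpace ℂ F] (c : E →L[ℂ] ℂ) (v : F) :
    IsCompactOperator ⇑(c.smulRight v) := by
  refine ⟨(fun t : ℂ => t • v) '' Metric.closedBall 0 1,
    (isCompact_closedBall 0 1).image (by continuity), ?_⟩
  have hc : c ⁻¹' Metric.closedBall 0 1 ∈ nhds (0 : E) := by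
    apply c.continuous.continuousAt.preimage_mem_nhds
    rw [map_zero]
    exact Metric.closedBall_mem_nhds (0 : ℂ) one_pos
  exact Filter.mem_of_superset hc fun ξ hξ => ⟨c ξ, hξ, rfl⟩

end Remark22

theorem rpow_two_toReal (a : ℝ) : a ^ (2 : ℝ≥0∞).toReal = a ^ 2 := by
  rw [show ((2 : ℝ≥0∞).toReal) = ((2 : ℕ) : ℝ) by norm_num, Real.rpow_natCast]


set_option maxHeartbeats 1000000

open Remark22 ENNReal

/-- The paper's Remark 22.  Let `Γ` be a group with a proper left-invariant metric `d`,
let `T` be a bounded operator on `ℓ²(Γ)` of finite propagation (there is `R ≥ 0` with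
`⟨e_y, T e_x⟩ = 0` whenever `d x y > R`), and let `f : Γ → ℂ` be a bounded function
satisfying the Higson condition: for every `ε > 0` and `S ≥ 0` the set of `x` admitting
some `y` with `d x y ≤ S` and `‖f x - f y‖ ≥ ε` is finite.  Then the commutator
`T ∘ M_f - M_f ∘ T` is a compact operator on `ℓ²(Γ)`. -/
theorem commutator_finite_propagation_mult_compact
    {Γ : Type*} [Group Γ] [DecidableEq Γ]
    (d : Γ → Γ → ℝ)
    (hd_self : ∀ x : Γ, d x x = 0)
    (hd_sep : ∀ x y : Γ, d x y = 0 → x = y)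
    (hd_symm : ∀ x y : Γ, d x y = d y x)
    (hd_triangle : ∀ x y z : Γ, d x z ≤ d x y + d y z)
    (hd_leftinv : ∀ g x y : Γ, d (g * x) (g * y) = d x y)
    (hd_proper : ∀ (x : Γ) (R : ℝ), {y : Γ | d x y ≤ R}.Finite)
    (T : lp (fun _ : Γ => ℂ) 2 →L[ℂ] lp (fun _ : Γ => ℂ) 2)
    (hT_prop : ∃ R : ℝ, 0 ≤ R ∧ ∀ x y : Γ, R < d x y →
      (inner ℂ (lp.single 2 y (1 : ℂ)) (T (lp.single 2 x (1 : ℂ))) : ℂ) = 0)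
    (f : Γ → ℂ)
    (hf_bdd : ∃ C : ℝ, ∀ x : Γ, ‖f x‖ ≤ C)
    (hf : ∀ ε : ℝ, 0 < ε → ∀ S : ℝ, 0 ≤ S →
      {x : Γ | ∃ y : Γ, d x y ≤ S ∧ ε ≤ ‖f x - f y‖}.Finite)
    (Mf : lp (fun _ : Γ => ℂ) 2 →L[ℂ] lp (fun _ : Γ => ℂ) 2)
    (hMf : ∀ (ξ : lp (fun _ : Γ => ℂ) 2) (x : Γ), Mf ξ x = f x * ξ x) :
    IsCompactOperator (T ∘L Mf - Mf ∘L T) := by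
  classical
  obtain ⟨R, hR0, hTp⟩ := hT_prop
  have hp2 : (0 : ℝ) < (2 : ℝ≥0∞).toReal := by norm_num
  set e : Γ → lp (fun _ : Γ => ℂ) 2 := fun x => lp.single 2 x (1 : ℂ) with he
  set C : lp (fun _ : Γ => ℂ) 2 →L[ℂ] lp (fun _ : Γ => ℂ) 2 := T ∘L Mf - Mf ∘L T with hCdef
  -- the matrix entries of `T` vanish outside a band of width `R`
  have ht0 : ∀ x y : Γ, R < d x y → T (e x) y = 0 := by
    intro x y h
    have h2 := hTp x y h
    rwa [lp.inner_single_left, RCLike.inner_apply, map_one, mul_one] at h2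
  have hnorme : ∀ x : Γ, ‖e x‖ = 1 := by
    intro x
    exact (lp.norm_single (E := fun _ : Γ => ℂ) (by norm_num : (0 : ℝ≥0∞) < 2) x (1 : ℂ)).trans norm_one
  have htle : ∀ x y : Γ, ‖T (e x) y‖ ≤ ‖T‖ := by
    intro x y
    refine (lp.norm_apply_le_norm (by norm_num) (T (e x)) y).trans ?_
    calc ‖T (e x)‖ ≤ ‖T‖ * ‖e x‖ := T.le_opNorm _
      _ = ‖T‖ := by rw [hnorme, mul_one]
  set N : ℕ := (hd_proper 1 R).toFinset.card with hN
  have hcard : ∀ z : Γ, ((hd_proper z R).toFinset).card ≤ N := by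
    intro z
    refine Finset.card_le_card_of_injOn (fun x => z⁻¹ * x) ?_ ?_
    · intro x hx
      rw [Finset.mem_coe, Set.Finite.mem_toFinset] at hx ⊢
      have h1 : d (z⁻¹ * z) (z⁻¹ * x) = d z x := hd_leftinv z⁻¹ z x
      rw [inv_mul_cancel] at h1
      simpa [Set.mem_setOf_eq, h1] using hx
    · intro a _ b _ hab
      exact mul_left_cancel hab
  -- key approximation step
  have key : ∀ ε : ℝ, 0 < ε → ∃ K : lp (fun _ : Γ => ℂ) 2 →L[ℂ] lp (fun _ : Γ => ℂ) 2,
      IsCompactOperator ⇑K ∧ ‖C - K‖ ≤ ε * (‖T‖ * N) := by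
    intro ε hε
    set F : Finset Γ := (hf ε hε R hR0).toFinset with hF
    set P : lp (fun _ : Γ => ℂ) 2 →L[ℂ] lp (fun _ : Γ => ℂ) 2 :=
      ∑ x ∈ F, (innerSL ℂ (e x)).smulRight (e x) with hP
    have hPcompact : IsCompactOperator ⇑P := by
      rw [hP]
      refine Finset.sum_induction _ (fun (S : lp (fun _ : Γ => ℂ) 2 →L[ℂ] lp (fun _ : Γ => ℂ) 2) => IsCompactOperator ⇑S) ?_ ?_ ?_
      · intro a b ha hb
        exact ha.add hb
      · exact isCompactOperator_zero
      · intro x _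
        exact isCompactOperator_smulRight _ _
    refine ⟨C ∘L P, by rw [ContinuousLinearMap.coe_comp']; exact hPcompact.clm_comp C, ?_⟩
    have hTN : (0 : ℝ) ≤ ‖T‖ * N := mul_nonneg (norm_nonneg _) (Nat.cast_nonneg _)
    refine ContinuousLinearMap.opNorm_le_bound _ (mul_nonneg hε.le hTN) fun ξ => ?_
    set η : lp (fun _ : Γ => ℂ) 2 := ξ - P ξ with hηdef
    have hPξ : P ξ = ∑ x ∈ F, lp.single 2 x (ξ x) := by
      rw [hP, ContinuousLinearMap.sum_apply]
      refine Finset.sum_congr rfl fun x _ => ?_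
      rw [ContinuousLinearMap.smulRight_apply, innerSL_apply_apply, he, lp.inner_single_left,
        RCLike.inner_apply, map_one, mul_one, single_eq_smul]
    have hηco : ∀ z : Γ, η z = if z ∈ F then 0 else ξ z := by
      intro z
      rw [hηdef, hPξ]
      simp only [lp.coeFn_sub, Pi.sub_apply, lp.coeFn_sum, Finset.sum_apply, lp.single_apply,
        Finset.sum_dite_eq]
      by_cases hz : z ∈ F <;> simp [hz]
    have hηF : ∀ z ∈ F, η z = 0 := fun z hz => by rw [hηco z, if_pos hz]
    have hηnorm : ‖η‖ ≤ ‖ξ‖ := by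
      have h2 := lp.norm_compl_sum_single hp2 ξ F
      rw [rpow_two_toReal, rpow_two_toReal] at h2
      rw [hPξ] at hηdef
      have h3 : ‖η‖ ^ 2 ≤ ‖ξ‖ ^ 2 := by
        rw [hηdef, h2]
        have : (0 : ℝ) ≤ ∑ i ∈ F, ‖ξ i‖ ^ (2 : ℝ≥0∞).toReal :=
          Finset.sum_nonneg fun i _ => Real.rpow_nonneg (norm_nonneg _) _
        linarith
      exact (pow_le_pow_iff_left₀ (norm_nonneg _) (norm_nonneg _) two_ne_zero).mp h3
    -- the coordinates of `C η` as explicit finite sums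
    have hCco : ∀ y : Γ, HasSum (fun x => (f x - f y) * (η x * T (e x) y)) (C η y) := by
      intro y
      have hA := hasSum_coord T (Mf η) y
      have hA' : HasSum (fun x => f x * (η x * T (e x) y)) (T (Mf η) y) := by
        refine hA.congr_fun fun x => ?_
        rw [hMf, mul_assoc]
      have hB := (hasSum_coord T η y).mul_left (f y)
      have hAB := hA'.sub hB
      have hval : C η y = T (Mf η) y - f y * (T η y) := by
        have h5 : C η = T (Mf η) - Mf (T η) := by
          rw [hCdef]; rfl
        rw [h5, lp.coeFn_sub, Pi.sub_apply, hMf]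
      have h6 : (fun x => (f x - f y) * (η x * T (e x) y)) =
          fun x => f x * (η x * T (e x) y) - f y * (η x * T (e x) y) := by
        funext x; ring
      rw [hval, h6]
      exact hAB
    set S : Γ → Finset Γ := fun y => (hd_proper y R).toFinset with hS
    have hmemS : ∀ y x : Γ, x ∈ S y ↔ d y x ≤ R := fun y x => Set.Finite.mem_toFinset _
    have hCval : ∀ y : Γ, ‖C η y‖ ≤ ∑ x ∈ S y, ε * ‖T‖ * ‖η x‖ := by
      intro y
      have h0 : ∀ x ∉ S y, (f x - f y) * (η x * T (e x) y) = 0 := by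
        intro x hx
        rw [hmemS] at hx
        push_neg at hx
        rw [ht0 x y (by rw [hd_symm]; exact hx)]
        ring
      have heq := (hCco y).unique (hasSum_sum_of_ne_finset_zero h0)
      rw [heq]
      refine (norm_sum_le _ _).trans (Finset.sum_le_sum fun x hx => ?_)
      by_cases hzero : η x = 0
      · rw [hzero]
        simp only [mul_zero, zero_mul, norm_zero]
        positivity
      · have hxF : x ∉ F := fun hmem => hzero (hηF x hmem)
        have hflt : ‖f x - f y‖ ≤ ε := by
          by_contra hcon
          push_neg at hcon
          refine hxF ?_
          rw [hF, Set.Finite.mem_toFinset]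
          exact ⟨y, by rw [hd_symm]; exact (hmemS y x).1 hx, hcon.le⟩
        calc ‖(f x - f y) * (η x * T (e x) y)‖
            = ‖f x - f y‖ * (‖η x‖ * ‖T (e x) y‖) := by rw [norm_mul, norm_mul]
          _ ≤ ε * (‖η x‖ * ‖T‖) := by
              have := htle x y
              gcongr
          _ = ε * ‖T‖ * ‖η x‖ := by ring
    -- ℓ² estimate
    have hηsum : Summable (fun x : Γ => ‖η x‖ ^ 2) :=
      (lp.hasSum_norm hp2 η).summable.congr fun x => by rw [rpow_two_toReal]
    have hηtsum : ∑' x : Γ, ‖η x‖ ^ 2 = ‖η‖ ^ 2 := by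
      rw [show ‖η‖ ^ 2 = ‖η‖ ^ (2 : ℝ≥0∞).toReal from (rpow_two_toReal _).symm,
        lp.norm_rpow_eq_tsum hp2 η]
      exact tsum_congr fun x => by rw [rpow_two_toReal]
    have hptsq : ∀ y : Γ, ‖C η y‖ ^ 2 ≤ (ε * ‖T‖) ^ 2 * N * ∑ x ∈ S y, ‖η x‖ ^ 2 := by
      intro y
      have h2 : (∑ x ∈ S y, ‖η x‖) ^ 2 ≤ (S y).card * ∑ x ∈ S y, ‖η x‖ ^ 2 := by
        exact sq_sum_le_card_mul_sum_sq
      have h3 : ((S y).card : ℝ) ≤ (N : ℝ) := Nat.cast_le.2 (hcard y)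
      calc ‖C η y‖ ^ 2 ≤ (∑ x ∈ S y, ε * ‖T‖ * ‖η x‖) ^ 2 := by
            have := hCval y
            gcongr
        _ = (ε * ‖T‖) ^ 2 * (∑ x ∈ S y, ‖η x‖) ^ 2 := by
            rw [← Finset.mul_sum, mul_pow]
        _ ≤ (ε * ‖T‖) ^ 2 * ((S y).card * ∑ x ∈ S y, ‖η x‖ ^ 2) := by gcongr
        _ ≤ (ε * ‖T‖) ^ 2 * ((N : ℝ) * ∑ x ∈ S y, ‖η x‖ ^ 2) := by
            have hnn : (0 : ℝ) ≤ ∑ x ∈ S y, ‖η x‖ ^ 2 :=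
              Finset.sum_nonneg fun x _ => by positivity
            gcongr
        _ = (ε * ‖T‖) ^ 2 * N * ∑ x ∈ S y, ‖η x‖ ^ 2 := by ring
    have hpartial : ∀ Y : Finset Γ, ∑ y ∈ Y, ∑ x ∈ S y, ‖η x‖ ^ 2 ≤ N * ‖η‖ ^ 2 := by
      intro Y
      set X : Finset Γ := Y.biUnion S with hX
      have hsub : ∀ y ∈ Y, S y ⊆ X := fun y hy => Finset.subset_biUnion_of_mem S hy
      have step1 : ∑ y ∈ Y, ∑ x ∈ S y, ‖η x‖ ^ 2
          = ∑ y ∈ Y, ∑ x ∈ X, if x ∈ S y then ‖η x‖ ^ 2 else 0 := by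
        refine Finset.sum_congr rfl fun y hy => ?_
        rw [Finset.sum_ite_mem, Finset.inter_eq_right.mpr (hsub y hy)]
      rw [step1, Finset.sum_comm]
      have step2 : ∀ x ∈ X, (∑ y ∈ Y, if x ∈ S y then ‖η x‖ ^ 2 else 0)
          ≤ (N : ℝ) * ‖η x‖ ^ 2 := by
        intro x _
        rw [← Finset.sum_filter, Finset.sum_const, nsmul_eq_mul]
        have hfilter : (Y.filter fun y => x ∈ S y) ⊆ (hd_proper x R).toFinset := by
          intro y hy
          rw [Set.Finite.mem_toFinset]
          have h7 := (hmemS y x).1 (Finset.mem_filter.1 hy).2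
          exact le_of_eq_of_le (hd_symm x y) h7
        have h8 : (((Y.filter fun y => x ∈ S y).card : ℕ) : ℝ) ≤ (N : ℝ) :=
          Nat.cast_le.2 (le_trans (Finset.card_le_card hfilter) (hcard x))
        exact mul_le_mul_of_nonneg_right h8 (by positivity)
      refine le_trans (Finset.sum_le_sum step2) ?_
      rw [← Finset.mul_sum]
      refine mul_le_mul_of_nonneg_left ?_ (Nat.cast_nonneg N)
      calc ∑ x ∈ X, ‖η x‖ ^ 2 ≤ ∑' x : Γ, ‖η x‖ ^ 2 :=
            Summable.sum_le_tsum X (fun x _ => by positivity) hηsum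
        _ = ‖η‖ ^ 2 := hηtsum
    have hsummC : Summable (fun y : Γ => ‖C η y‖ ^ 2) :=
      (lp.hasSum_norm hp2 (C η)).summable.congr fun y => by rw [rpow_two_toReal]
    have hCn2 : ‖C η‖ ^ 2 ≤ (ε * ‖T‖ * N * ‖η‖) ^ 2 := by
      have hL : ‖C η‖ ^ 2 = ∑' y : Γ, ‖C η y‖ ^ 2 := by
        rw [show ‖C η‖ ^ 2 = ‖C η‖ ^ (2 : ℝ≥0∞).toReal from (rpow_two_toReal _).symm,
          lp.norm_rpow_eq_tsum hp2 (C η)]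
        exact tsum_congr fun y => by rw [rpow_two_toReal]
      rw [hL]
      have hbig : ∑' y : Γ, ‖C η y‖ ^ 2 ≤ (ε * ‖T‖) ^ 2 * N * (N * ‖η‖ ^ 2) := by
        refine Summable.tsum_le_of_sum_le hsummC fun Y => ?_
        calc ∑ y ∈ Y, ‖C η y‖ ^ 2
            ≤ ∑ y ∈ Y, (ε * ‖T‖) ^ 2 * N * ∑ x ∈ S y, ‖η x‖ ^ 2 :=
              Finset.sum_le_sum fun y _ => hptsq y
          _ = (ε * ‖T‖) ^ 2 * N * ∑ y ∈ Y, ∑ x ∈ S y, ‖η x‖ ^ 2 := by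
              rw [Finset.mul_sum]
          _ ≤ (ε * ‖T‖) ^ 2 * N * (N * ‖η‖ ^ 2) := by
              have := hpartial Y
              gcongr
      calc ∑' y : Γ, ‖C η y‖ ^ 2 ≤ (ε * ‖T‖) ^ 2 * N * (N * ‖η‖ ^ 2) := hbig
        _ = (ε * ‖T‖ * N * ‖η‖) ^ 2 := by ring
    have hCnorm : ‖C η‖ ≤ ε * ‖T‖ * N * ‖η‖ :=
      (pow_le_pow_iff_left₀ (norm_nonneg _)
        (mul_nonneg (mul_nonneg (mul_nonneg hε.le (norm_nonneg _)) (Nat.cast_nonneg _))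
          (norm_nonneg _)) two_ne_zero).mp hCn2
    have happ : (C - C ∘L P) ξ = C η := by
      rw [ContinuousLinearMap.sub_apply, ContinuousLinearMap.comp_apply, hηdef, map_sub]
    rw [happ]
    calc ‖C η‖ ≤ ε * ‖T‖ * N * ‖η‖ := hCnorm
      _ ≤ ε * ‖T‖ * N * ‖ξ‖ := by
          exact mul_le_mul_of_nonneg_left hηnorm
            (mul_nonneg (mul_nonneg hε.le (norm_nonneg _)) (Nat.cast_nonneg _))
      _ = ε * (‖T‖ * N) * ‖ξ‖ := by ring
  -- conclude by closedness of the set of compact operators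
  have hmem : C ∈ {S : lp (fun _ : Γ => ℂ) 2 →L[ℂ] lp (fun _ : Γ => ℂ) 2 |
      IsCompactOperator ⇑S} := by
    rw [← isClosed_setOf_isCompactOperator.closure_eq]
    rw [Metric.mem_closure_iff]
    intro δ hδ
    have hA : (0 : ℝ) ≤ ‖T‖ * N := mul_nonneg (norm_nonneg _) (Nat.cast_nonneg _)
    have hA1 : (0 : ℝ) < ‖T‖ * N + 1 := by linarith
    obtain ⟨K, hK, hKle⟩ := key (δ / (‖T‖ * N + 1)) (div_pos hδ hA1)
    refine ⟨K, hK, ?_⟩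
    rw [dist_eq_norm]
    calc ‖C - K‖ ≤ δ / (‖T‖ * N + 1) * (‖T‖ * N) := hKle
      _ < δ / (‖T‖ * N + 1) * (‖T‖ * N + 1) :=
          mul_lt_mul_of_pos_left (lt_add_one _) (div_pos hδ hA1)
      _ = δ := div_mul_cancel₀ δ hA1.ne'
  exact hmem
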